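/- Let T be a self-adjoint operator and A any bounded operator on a Hilbert space H. If T² ⊥_B A then T^{2k} ⊥_B A for every integer k ≥ 1. -/

import Mathlib

set_option maxHeartbeats 1000000

local notation "⟪" x ", " y "⟫" => @inner ℂ _ _ x y

private lemma aux_logconvex {b : ℕ → ℝ} (hb0 : b 0 = 1) (hb : ∀ j, 0 ≤ b j)
    (hcs : ∀ j, b (j+1) ^ 2 ≤ b j * b (j+2)) : ∀ k, b 1 ^ k ≤ b k := by
  rcases eq_or_lt_of_le (hb 1) with h1 | h1
  · intro k
    cases k with
    | zero => simp [hb0]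
    | succ n => rw [← h1]; simpa [zero_pow] using hb (n+1)
  · have key : ∀ j, b 1 ^ j ≤ b j ∧ b j * b 1 ≤ b (j+1) := by
      intro j
      induction j with
      | zero => simp [hb0]
      | succ n ih =>
        obtain ⟨ih1, ih2⟩ := ih
        have hbn : 0 < b n := lt_of_lt_of_le (pow_pos h1 n) ih1
        have h1n : b 1 ^ (n+1) ≤ b (n+1) := by
          calc b 1 ^ (n+1) = b 1 ^ n * b 1 := by ring
          _ ≤ b n * b 1 := by nlinarith
          _ ≤ b (n+1) := ih2
        have hbn1 : 0 < b (n+1) := lt_of_lt_of_le (pow_pos h1 (n+1)) h1n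
        refine ⟨h1n, ?_⟩
        nlinarith [hcs n, ih2, hbn, hbn1]
    exact fun k => (key k).1

section AuxHilbert

variable {H : Type*} [NormedAddCommGroup H] [InnerProductSpace ℂ H] [CompleteSpace H]

private lemma aux_symPow (T : H →L[ℂ] H) (hT : IsSelfAdjoint T) :
    ∀ (j : ℕ) (y z : H), ⟪(T^j) y, z⟫ = ⟪y, (T^j) z⟫ := by
  intro j
  induction j with
  | zero => simp
  | succ n ih =>
    intro y z
    have h1 : (T^(n+1)) y = (T^n) (T y) := by rw [pow_succ, ContinuousLinearMap.mul_apply]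
    have h2 : (T^(n+1)) z = T ((T^n) z) := by rw [pow_succ', ContinuousLinearMap.mul_apply]
    rw [h1, h2, ih (T y) z]; exact hT.isSymmetric y ((T^n) z)

private lemma aux_inner_self (u : H) : ⟪u, u⟫ = ((‖u‖^2 : ℝ) : ℂ) := by
  rw [inner_self_eq_norm_sq_to_K]; norm_cast

private lemma aux_jensen (T : H →L[ℂ] H) (hT : IsSelfAdjoint T) (x : H) (hx : ‖x‖ = 1)
    (k : ℕ) : (‖T x‖^2)^k ≤ ‖(T^k) x‖^2 := by
  have hb : ∀ j, (fun j => ‖(T^j) x‖^2) (j+1) ^ 2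
      ≤ (fun j => ‖(T^j) x‖^2) j * (fun j => ‖(T^j) x‖^2) (j+2) := by
    intro j
    simp only
    have e1 : (T^(j+1)) x = T ((T^j) x) := by rw [pow_succ', ContinuousLinearMap.mul_apply]
    have e2 : T ((T^(j+1)) x) = (T^(j+2)) x := by
      rw [pow_succ' T (j+1), ContinuousLinearMap.mul_apply]
    have h1 : ⟪(T^(j+1)) x, (T^(j+1)) x⟫ = ⟪(T^j) x, (T^(j+2)) x⟫ := by
      calc ⟪(T^(j+1)) x, (T^(j+1)) x⟫ = ⟪T ((T^j) x), (T^(j+1)) x⟫ := by rw [e1]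
      _ = ⟪(T^j) x, T ((T^(j+1)) x)⟫ := hT.isSymmetric _ _
      _ = ⟪(T^j) x, (T^(j+2)) x⟫ := by rw [e2]
    have h2 : ‖(T^(j+1)) x‖^2 = ‖⟪(T^(j+1)) x, (T^(j+1)) x⟫‖ := by
      rw [aux_inner_self, Complex.norm_real, Real.norm_eq_abs,
        _root_.abs_of_nonneg (sq_nonneg _)]
    rw [h2, h1]
    calc ‖⟪(T^j) x, (T^(j+2)) x⟫‖^2 ≤ (‖(T^j) x‖ * ‖(T^(j+2)) x‖)^2 := by
          have := norm_inner_le_norm (𝕜 := ℂ) ((T^j) x) ((T^(j+2)) x)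
          nlinarith [norm_nonneg (⟪(T^j) x, (T^(j+2)) x⟫)]
    _ = ‖(T^j) x‖^2 * ‖(T^(j+2)) x‖^2 := by ring
  have := aux_logconvex (b := fun j => ‖(T^j) x‖^2) (by simp [hx]) (fun j => sq_nonneg _) hb k
  simpa using this

end AuxHilbert


section Main

variable {H : Type*} [NormedAddCommGroup H] [InnerProductSpace ℂ H] [CompleteSpace H]

private lemma aux_key (T A : H →L[ℂ] H) (hT : IsSelfAdjoint T)
    (hBJ : ∀ lam : ℂ, ‖T ^ 2 + lam • A‖ ≥ ‖T ^ 2‖)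
    {m a : ℝ} (hm_def : m = ‖T ^ 2‖) (ha_def : a = ‖A‖)
    (hm2 : ‖T‖ * ‖T‖ = m) (hm0 : 0 < m)
    (u : ℂ) (hu : ‖u‖ = 1) (t : ℝ) (ht : 0 < t) (htc : t * (t + a) ≤ m/2) :
    ∃ x : H, ‖x‖ = 1 ∧ m - Real.sqrt (2*m*(t*(t+a))) ≤ ‖T x‖^2 ∧
      -((t*(2*m+a^2)/2 + Real.sqrt (2*m*(t*(t+a))) * a)/m) ≤ (u * ⟪x, A x⟫).re := by
  have ha0 : (0:ℝ) ≤ a := ha_def ▸ norm_nonneg A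
  have hta : t*t ≤ t*(t+a) := by nlinarith
  have hmt : 0 < m - t^2 := by nlinarith
  set lam0 : ℂ := (t:ℂ) * u with hlam0_def
  have hlam0 : ‖lam0‖ = t := by
    rw [norm_mul, hu, Complex.norm_real, Real.norm_eq_abs, _root_.abs_of_pos ht, mul_one]
  have hlt : m - t^2 < ‖T^2 + lam0 • A‖ := lt_of_lt_of_le (by nlinarith) (hm_def ▸ hBJ lam0)
  obtain ⟨x₀, hx₀, hBx₀⟩ := (T^2 + lam0 • A).exists_lt_apply_of_lt_opNorm hlt
  have hx₀0 : x₀ ≠ 0 := by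
    intro h
    rw [h, map_zero, norm_zero] at hBx₀
    nlinarith
  have hnx₀ : 0 < ‖x₀‖ := norm_pos_iff.mpr hx₀0
  set x : H := (‖x₀‖⁻¹ : ℝ) • x₀ with hx_def
  have hx : ‖x‖ = 1 := by
    rw [hx_def, norm_smul, norm_inv, norm_norm, inv_mul_cancel₀ (ne_of_gt hnx₀)]
  have hBx : m - t^2 < ‖(T^2 + lam0 • A) x‖ := by
    have heq : (T^2 + lam0 • A) x = (‖x₀‖⁻¹ : ℝ) • ((T^2 + lam0 • A) x₀) :=
      (T^2 + lam0 • A).map_smul_of_tower _ _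
    have h1 : (1:ℝ) ≤ ‖x₀‖⁻¹ := (one_le_inv₀ hnx₀).mpr hx₀.le
    rw [heq, norm_smul, norm_inv, norm_norm]
    calc m - t^2 < ‖(T^2 + lam0 • A) x₀‖ := hBx₀
    _ = 1 * ‖(T^2 + lam0 • A) x₀‖ := (one_mul _).symm
    _ ≤ ‖x₀‖⁻¹ * ‖(T^2 + lam0 • A) x₀‖ :=
        mul_le_mul_of_nonneg_right h1 (norm_nonneg _)
  set v : H := (T^2) x with hv_def
  set w : H := A x with hw_def
  have hvx : v = T (T x) := by rw [hv_def, pow_two, ContinuousLinearMap.mul_apply]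
  set p : ℝ := ‖T x‖^2 with hp_def
  have hip : ⟪v, x⟫ = ((p : ℝ) : ℂ) := by
    rw [hvx]
    exact (hT.isSymmetric (T x) x).trans (aux_inner_self (T x))
  have hv_le : ‖v‖ ≤ m := by
    have := (T^2).le_opNorm x
    rw [hx, mul_one] at this
    exact le_trans this (le_of_eq hm_def.symm)
  have hw_le : ‖w‖ ≤ a := by
    have := A.le_opNorm x
    rw [hx, mul_one] at this
    exact le_trans this (le_of_eq ha_def.symm)
  have hBapp : (T^2 + lam0 • A) x = v + lam0 • w := by
    simp [hv_def, hw_def]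
  have hnv_lb : m - t^2 - t*a ≤ ‖v‖ := by
    have h1 : ‖v + lam0 • w‖ ≤ ‖v‖ + t * ‖w‖ := by
      have := norm_add_le v (lam0 • w)
      rwa [norm_smul, hlam0] at this
    rw [hBapp] at hBx
    nlinarith
  have hpv : ‖v‖^2 ≤ m * p := by
    have h := T.le_opNorm (T x)
    rw [← hvx] at h
    have h2 : ‖v‖^2 ≤ (‖T‖*‖T x‖)^2 := by
      have := pow_le_pow_left₀ (norm_nonneg v) h 2
      simpa using this
    calc ‖v‖^2 ≤ (‖T‖*‖T x‖)^2 := h2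
    _ = (‖T‖*‖T‖)*(‖T x‖^2) := by ring
    _ = m * p := by rw [hm2]
  set δ : ℝ := ‖v - (m:ℂ) • x‖ with hδ_def
  have hδ0 : 0 ≤ δ := norm_nonneg _
  have hδ2 : δ^2 = ‖v‖^2 - 2*(m*p) + m^2 := by
    have hns := norm_sub_sq (𝕜 := ℂ) v ((m:ℂ) • x)
    rw [inner_smul_right, hip] at hns
    rw [hδ_def, hns, norm_smul, hx, Complex.norm_real, Real.norm_eq_abs,
      _root_.abs_of_pos hm0]
    have : RCLike.re ((m:ℂ) * ((p:ℝ):ℂ)) = m * p := by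
      rw [← Complex.ofReal_mul]
      simp
    rw [this]
    ring
  have hδ2' : δ^2 ≤ 2*m*(t*(t+a)) := by nlinarith [hδ2, hpv, hv_le, hnv_lb, norm_nonneg v]
  set s : ℝ := Real.sqrt (2*m*(t*(t+a))) with hs_def
  have hδs : δ ≤ s := by
    rw [hs_def, ← Real.sqrt_sq hδ0]
    exact Real.sqrt_le_sqrt hδ2'
  have hp_lb : m - δ ≤ p := by
    have h1 : ⟪v - (m:ℂ) • x, x⟫ = ((p - m : ℝ) : ℂ) := by
      rw [inner_sub_left, inner_smul_left, hip, aux_inner_self x, hx]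
      rw [Complex.conj_ofReal]
      push_cast
      ring
    have h2 : ‖⟪v - (m:ℂ) • x, x⟫‖ ≤ δ := by
      have := norm_inner_le_norm (𝕜 := ℂ) (v - (m:ℂ) • x) x
      rwa [hx, mul_one] at this
    rw [h1, Complex.norm_real, Real.norm_eq_abs] at h2
    have := abs_le.mp h2
    linarith [this.1]
  have hP1 : m - s ≤ p := by linarith
  have hsq : (m - t^2)^2 < ‖v + lam0 • w‖^2 := by
    rw [hBapp] at hBx
    nlinarith [norm_nonneg (v + lam0 • w)]
  have hexp : ‖v + lam0 • w‖^2 = ‖v‖^2 + 2*(lam0 * ⟪v,w⟫).re + t^2*‖w‖^2 := by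
    have hns := norm_add_sq (𝕜 := ℂ) v (lam0 • w)
    rw [inner_smul_right, norm_smul, hlam0] at hns
    rw [hns]
    have : RCLike.re (lam0 * ⟪v,w⟫) = (lam0 * ⟪v,w⟫).re := rfl
    rw [this]
    ring
  have hsplit : ⟪v, w⟫ = (m:ℂ) * ⟪x, w⟫ + ⟪v - (m:ℂ) • x, w⟫ := by
    rw [inner_sub_left, inner_smul_left, Complex.conj_ofReal]
    ring
  have herr : ‖⟪v - (m:ℂ) • x, w⟫‖ ≤ δ * a := by
    have := norm_inner_le_norm (𝕜 := ℂ) (v - (m:ℂ) • x) w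
    nlinarith [norm_nonneg (v - (m:ℂ) • x)]
  have hre : (lam0 * ⟪v,w⟫).re ≤ t*m*(u * ⟪x,w⟫).re + t*(δ*a) := by
    rw [hsplit, mul_add]
    rw [Complex.add_re]
    have e1 : (lam0 * ((m:ℂ) * ⟪x,w⟫)).re = t*m*(u * ⟪x,w⟫).re := by
      have : lam0 * ((m:ℂ) * ⟪x,w⟫) = ((t*m : ℝ) : ℂ) * (u * ⟪x,w⟫) := by
        rw [hlam0_def]; push_cast; ring
      rw [this, Complex.re_ofReal_mul]
    have e2 : (lam0 * ⟪v - (m:ℂ) • x, w⟫).re ≤ t*(δ*a) := by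
      have h1 := Complex.re_le_norm (lam0 * ⟪v - (m:ℂ) • x, w⟫)
      have h2 : ‖lam0 * ⟪v - (m:ℂ) • x, w⟫‖ ≤ t * (δ*a) := by
        rw [norm_mul, hlam0]
        exact mul_le_mul_of_nonneg_left herr ht.le
      linarith
    linarith [e1.le, e2]
  refine ⟨x, hx, hP1, ?_⟩
  have hv2 : ‖v‖^2 ≤ m^2 := by nlinarith [hv_le, norm_nonneg v]
  have hww : ‖w‖*‖w‖ ≤ a*a := mul_le_mul hw_le hw_le (norm_nonneg w) ha0
  have hw2 : t^2*‖w‖^2 ≤ t^2*a^2 := by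
    calc t^2*‖w‖^2 = t^2*(‖w‖*‖w‖) := by ring
    _ ≤ t^2*(a*a) := mul_le_mul_of_nonneg_left hww (sq_nonneg t)
    _ = t^2*a^2 := by ring
  have hsq' : (m - t^2)^2 < ‖v‖^2 + 2*(lam0 * ⟪v,w⟫).re + t^2*‖w‖^2 := hexp ▸ hsq
  have hbig : (m - t^2)^2 < m^2 + 2*(t*m*(u * ⟪x,w⟫).re + t*(δ*a)) + t^2*a^2 := by
    linarith [hsq', hre, hv2, hw2]
  have hR2 : 2*t*(-(t*(2*m+a^2)/2 + s * a)) ≤ 2*t*(m*(u * ⟪x,w⟫).re) := by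
    have e3 : (0:ℝ) ≤ t^4 := by positivity
    have e4 : (0:ℝ) ≤ t*(a*(s-δ)) := mul_nonneg ht.le (mul_nonneg ha0 (sub_nonneg.mpr hδs))
    linarith [hbig, e3, e4]
  have hR3 : -(t*(2*m+a^2)/2 + s * a) ≤ m*(u * ⟪x,w⟫).re :=
    (mul_le_mul_iff_right₀ (by positivity : (0:ℝ) < 2*t)).mp hR2
  rw [show -((t*(2*m+a^2)/2 + s * a)/m) = (-(t*(2*m+a^2)/2 + s * a))/m by ring,
    div_le_iff₀ hm0]
  linarith [hR3, mul_comm m ((u * ⟪x, A x⟫).re)]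

private lemma aux_claim1 (T A : H →L[ℂ] H) (hT : IsSelfAdjoint T)
    (hBJ : ∀ lam : ℂ, ‖T ^ 2 + lam • A‖ ≥ ‖T ^ 2‖)
    {m a : ℝ} (hm_def : m = ‖T ^ 2‖) (ha_def : a = ‖A‖)
    (hm2 : ‖T‖ * ‖T‖ = m) (hm0 : 0 < m) :
    ∀ ε : ℝ, 0 < ε → ∀ u : ℂ, ‖u‖ = 1 →
      ∃ x : H, ‖x‖ = 1 ∧ m - ε ≤ ‖T x‖^2 ∧ -ε ≤ (u * ⟪x, A x⟫).re := by
  intro ε hε u hu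
  obtain ⟨t, ht0, htc, h1, h2⟩ : ∃ t : ℝ, 0 < t ∧ t*(t+a) ≤ m/2 ∧
      Real.sqrt (2*m*(t*(t+a))) ≤ ε ∧
      (t*(2*m+a^2)/2 + Real.sqrt (2*m*(t*(t+a))) * a)/m ≤ ε := by
    have hc1 : Filter.Tendsto (fun t : ℝ => t*(t+a)) (nhdsWithin 0 (Set.Ioi 0)) (nhds 0) := by
      have : ContinuousAt (fun t : ℝ => t*(t+a)) 0 := by fun_prop
      have := this.tendsto.mono_left (nhdsWithin_le_nhds (a := (0:ℝ)) (s := Set.Ioi (0:ℝ)))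
      simpa using this
    have hc2 : Filter.Tendsto (fun t : ℝ => Real.sqrt (2*m*(t*(t+a))))
        (nhdsWithin 0 (Set.Ioi 0)) (nhds 0) := by
      have hco : Continuous (fun t : ℝ => Real.sqrt (2*m*(t*(t+a)))) :=
        Real.continuous_sqrt.comp (by fun_prop)
      have := hco.continuousAt.tendsto.mono_left
        (nhdsWithin_le_nhds (a := (0:ℝ)) (s := Set.Ioi (0:ℝ)))
      simpa using this
    have hc3 : Filter.Tendsto
        (fun t : ℝ => (t*(2*m+a^2)/2 + Real.sqrt (2*m*(t*(t+a))) * a)/m)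
        (nhdsWithin 0 (Set.Ioi 0)) (nhds 0) := by
      have h4 : Filter.Tendsto (fun t : ℝ => t*(2*m+a^2)/2) (nhdsWithin 0 (Set.Ioi 0))
          (nhds 0) := by
        have : ContinuousAt (fun t : ℝ => t*(2*m+a^2)/2) 0 := by fun_prop
        have := this.tendsto.mono_left (nhdsWithin_le_nhds (a := (0:ℝ)) (s := Set.Ioi (0:ℝ)))
        simpa using this
      have h5 := (h4.add (hc2.mul_const a)).div_const m
      simpa using h5
    have e1 := hc1.eventually_le_const (by linarith : (0:ℝ) < m/2)
    have e2 := hc2.eventually_le_const hε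
    have e3 := hc3.eventually_le_const hε
    have e0 : ∀ᶠ t : ℝ in nhdsWithin 0 (Set.Ioi 0), 0 < t :=
      eventually_mem_nhdsWithin.mono (fun t ht => ht)
    obtain ⟨t, ht⟩ := (e0.and (e1.and (e2.and e3))).exists
    exact ⟨t, ht.1, ht.2.1, ht.2.2.1, ht.2.2.2⟩
  obtain ⟨x, hx, hp, hR⟩ := aux_key T A hT hBJ hm_def ha_def hm2 hm0 u hu t ht0 htc
  exact ⟨x, hx, by linarith, by linarith⟩

private lemma aux_claim2 (T A : H →L[ℂ] H) (hT : IsSelfAdjoint T)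
    (hBJ : ∀ lam : ℂ, ‖T ^ 2 + lam • A‖ ≥ ‖T ^ 2‖)
    {m a : ℝ} (hm_def : m = ‖T ^ 2‖) (ha_def : a = ‖A‖)
    (hm2 : ‖T‖ * ‖T‖ = m) (hm0 : 0 < m) :
    ∀ ε : ℝ, 0 < ε →
      ∃ z ∈ convexHull ℝ {z : ℂ | ∃ x : H, ‖x‖ = 1 ∧ m - ε ≤ ‖T x‖^2 ∧ z = ⟪x, A x⟫},
        ‖z‖ < ε := by
  intro ε hε
  set V : Set ℂ := {z : ℂ | ∃ x : H, ‖x‖ = 1 ∧ m - ε ≤ ‖T x‖^2 ∧ z = ⟪x, A x⟫} with hV_def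
  have claim1 := aux_claim1 T A hT hBJ hm_def ha_def hm2 hm0
  have h0K : (0:ℂ) ∈ closure (convexHull ℝ V) := by
    by_contra h0
    obtain ⟨f, u0, hf0, hfb⟩ := geometric_hahn_banach_point_closed
      ((convex_convexHull ℝ V).closure) isClosed_closure h0
    have hf00 : f 0 = 0 := map_zero f
    obtain ⟨x1, hx1, hp1, _⟩ := claim1 ε hε 1 (by simp)
    have hz1V : ⟪x1, A x1⟫ ∈ V := ⟨x1, hx1, hp1, rfl⟩
    have hu0 : 0 < u0 := by
      have := hf0
      rw [hf00] at this
      simpa using this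
    set wc : ℂ := ((f 1 : ℝ) : ℂ) - ((f Complex.I : ℝ) : ℂ) * Complex.I with hwc_def
    have hrep : ∀ z : ℂ, (wc * z).re = f z := by
      intro z
      have hzd : z = z.re • (1:ℂ) + z.im • Complex.I := by
        simp [Complex.real_smul, Complex.re_add_im]
      have hfz : f z = z.re * f 1 + z.im * f Complex.I := by
        conv_lhs => rw [hzd]
        rw [map_add, map_smul, map_smul]
        simp [smul_eq_mul]
      rw [hfz, hwc_def]
      simp [Complex.mul_re, Complex.sub_re, Complex.sub_im, Complex.mul_im]
      ring
    have hwc0 : wc ≠ 0 := by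
      intro h
      have h1 : f ⟪x1, A x1⟫ = 0 := by
        rw [← hrep, h, zero_mul, Complex.zero_re]
      have h2 := hfb _ (subset_closure (subset_convexHull ℝ _ hz1V))
      linarith
    have hnw : 0 < ‖wc‖ := norm_pos_iff.mpr hwc0
    set u1 : ℂ := -(((‖wc‖⁻¹ : ℝ)) : ℂ) * wc with hu1_def
    have hu1 : ‖u1‖ = 1 := by
      rw [hu1_def, norm_mul, norm_neg, Complex.norm_real, norm_inv, norm_norm,
        inv_mul_cancel₀ (ne_of_gt hnw)]
    set ε' : ℝ := min ε (u0 / (2*‖wc‖)) with hε'_def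
    have hε' : 0 < ε' := lt_min hε (by positivity)
    obtain ⟨x, hx, hp, hR⟩ := claim1 ε' hε' u1 hu1
    have hxV : ⟪x, A x⟫ ∈ V := ⟨x, hx, le_trans (by
      have := min_le_left ε (u0 / (2*‖wc‖)); linarith) hp, rfl⟩
    have hflow : u0 < f ⟪x, A x⟫ := hfb _ (subset_closure (subset_convexHull ℝ _ hxV))
    have hre1 : (u1 * ⟪x, A x⟫).re = -(‖wc‖⁻¹ * f ⟪x, A x⟫) := by
      have h1 : u1 * ⟪x, A x⟫ = -(((‖wc‖⁻¹ : ℝ) : ℂ) * (wc * ⟪x, A x⟫)) := by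
        rw [hu1_def]; ring
      rw [h1, Complex.neg_re, Complex.re_ofReal_mul, hrep]
    rw [hre1] at hR
    have hfin : f ⟪x, A x⟫ ≤ ε' * ‖wc‖ := by
      have h1 : ‖wc‖⁻¹ * f ⟪x, A x⟫ ≤ ε' := by linarith
      calc f ⟪x, A x⟫ = (‖wc‖ * ‖wc‖⁻¹) * f ⟪x, A x⟫ := by
            rw [mul_inv_cancel₀ (ne_of_gt hnw), one_mul]
      _ = ‖wc‖ * (‖wc‖⁻¹ * f ⟪x, A x⟫) := by ring
      _ ≤ ‖wc‖ * ε' := mul_le_mul_of_nonneg_left h1 hnw.le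
      _ = ε' * ‖wc‖ := mul_comm _ _
    have hε'2 : ε' * ‖wc‖ ≤ u0 / 2 := by
      have h1 : ε' ≤ u0 / (2*‖wc‖) := min_le_right _ _
      rw [le_div_iff₀ (by positivity : (0:ℝ) < 2*‖wc‖)] at h1
      nlinarith [h1, hnw]
    linarith
  rw [Metric.mem_closure_iff] at h0K
  obtain ⟨z, hz, hdist⟩ := h0K ε hε
  refine ⟨z, hz, ?_⟩
  rwa [dist_comm, dist_zero_right] at hdist


end Main

/-- For self-adjoint `T`, `T² ⊥_B A` implies `T^{2k} ⊥_B A` for every `k ≥ 1`. -/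
theorem selfAdjoint_even_power_birkhoffJames
    {H : Type*} [NormedAddCommGroup H] [InnerProductSpace ℂ H] [CompleteSpace H]
    (T A : H →L[ℂ] H) (hT : IsSelfAdjoint T)
    (hBJ : ∀ lam : ℂ, ‖T ^ 2 + lam • A‖ ≥ ‖T ^ 2‖) :
    ∀ k : ℕ, 1 ≤ k → ∀ lam : ℂ, ‖T ^ (2 * k) + lam • A‖ ≥ ‖T ^ (2 * k)‖ := by
  intro k hk lam
  by_cases hT0 : T = 0
  · subst hT0
    rw [zero_pow (by omega : 2 * k ≠ 0)]
    simpa using norm_nonneg ((0 : H →L[ℂ] H) + lam • A)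
  set m : ℝ := ‖T ^ 2‖ with hm_def
  set a : ℝ := ‖A‖ with ha_def
  have hm2 : ‖T‖ * ‖T‖ = m := by
    have := CStarRing.norm_star_mul_self (x := T)
    rw [hT.star_eq, ← pow_two] at this
    exact this.symm
  have hm0 : 0 < m := by
    have h : 0 < ‖T‖ := norm_pos_iff.mpr hT0
    calc (0:ℝ) < ‖T‖ * ‖T‖ := by positivity
    _ = m := hm2
  set B : H →L[ℂ] H := T ^ (2*k) + lam • A with hB_def
  have hBb : ∀ ε : ℝ, 0 < ε → ε ≤ m → (m - ε)^k - ‖lam‖ * ε ≤ ‖B‖ := by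
    intro ε hε hεm
    obtain ⟨z, hzhull, hznorm⟩ := aux_claim2 T A hT hBJ hm_def ha_def hm2 hm0 ε hε
    rw [mem_convexHull_iff_exists_fintype] at hzhull
    obtain ⟨ι, hfin, wt, zf, hw0, hw1, hzf, hsum⟩ := hzhull
    choose xf hxf1 hxf2 hxf3 using hzf
    have hBi : ∀ i, ⟪xf i, B (xf i)⟫ = ((‖(T^k) (xf i)‖^2 : ℝ) : ℂ) + lam * zf i := by
      intro i
      have h1 : B (xf i) = (T^(2*k)) (xf i) + lam • (A (xf i)) := by
        simp [hB_def]
      rw [h1, inner_add_right, inner_smul_right, hxf3]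
      congr 1
      have h2 : (T^(2*k)) (xf i) = (T^k) ((T^k) (xf i)) := by
        rw [two_mul, pow_add, ContinuousLinearMap.mul_apply]
      rw [h2, ← aux_symPow T hT k (xf i) ((T^k) (xf i))]
      exact aux_inner_self ((T^k) (xf i))
    have hjen : ∀ i, (m - ε)^k ≤ ‖(T^k) (xf i)‖^2 := by
      intro i
      calc (m-ε)^k ≤ (‖T (xf i)‖^2)^k := pow_le_pow_left₀ (by linarith) (hxf2 i) k
      _ ≤ _ := aux_jensen T hT (xf i) (hxf1 i) k
    set S : ℂ := ∑ i, (wt i : ℂ) * ⟪xf i, B (xf i)⟫ with hS_def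
    have hterm_le : ∀ i, ‖⟪xf i, B (xf i)⟫‖ ≤ ‖B‖ := by
      intro i
      have h1 := norm_inner_le_norm (𝕜 := ℂ) (xf i) (B (xf i))
      have h2 := B.le_opNorm (xf i)
      rw [hxf1 i, one_mul] at h1
      rw [hxf1 i, mul_one] at h2
      exact le_trans h1 h2
    have hS_le : S.re ≤ ‖B‖ := by
      calc S.re ≤ ‖S‖ := Complex.re_le_norm S
      _ ≤ ∑ i, ‖(wt i : ℂ) * ⟪xf i, B (xf i)⟫‖ := norm_sum_le _ _
      _ ≤ ∑ i, wt i * ‖B‖ := by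
          refine Finset.sum_le_sum (fun i _ => ?_)
          rw [norm_mul, Complex.norm_real, Real.norm_eq_abs, _root_.abs_of_nonneg (hw0 i)]
          exact mul_le_mul_of_nonneg_left (hterm_le i) (hw0 i)
      _ = ‖B‖ := by rw [← Finset.sum_mul, hw1, one_mul]
    have hz_eq : ∑ i, (wt i : ℂ) * zf i = z := by
      rw [← hsum]
      exact Finset.sum_congr rfl (fun i _ => (Complex.real_smul).symm)
    have hS_eq : S = ((∑ i, wt i * ‖(T^k) (xf i)‖^2 : ℝ) : ℂ) + lam * z := by
      rw [hS_def]
      calc ∑ i, (wt i : ℂ) * ⟪xf i, B (xf i)⟫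
          = ∑ i, ((wt i : ℂ) * ((‖(T^k) (xf i)‖^2 : ℝ) : ℂ) + lam * ((wt i : ℂ) * zf i)) := by
            refine Finset.sum_congr rfl (fun i _ => ?_)
            rw [hBi i]
            ring
      _ = (∑ i, (wt i : ℂ) * ((‖(T^k) (xf i)‖^2 : ℝ) : ℂ))
            + lam * (∑ i, (wt i : ℂ) * zf i) := by
            rw [Finset.sum_add_distrib, Finset.mul_sum]
      _ = ((∑ i, wt i * ‖(T^k) (xf i)‖^2 : ℝ) : ℂ) + lam * z := by
            rw [hz_eq]
            congr 1
            push_cast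
            rfl
    have hS_re : S.re = (∑ i, wt i * ‖(T^k) (xf i)‖^2) + (lam * z).re := by
      rw [hS_eq, Complex.add_re, Complex.ofReal_re]
    have h3 : (m-ε)^k ≤ ∑ i, wt i * ‖(T^k) (xf i)‖^2 := by
      calc (m-ε)^k = ∑ i, wt i * (m-ε)^k := by rw [← Finset.sum_mul, hw1, one_mul]
      _ ≤ _ := Finset.sum_le_sum (fun i _ => mul_le_mul_of_nonneg_left (hjen i) (hw0 i))
    have h4 : -(‖lam‖ * ε) ≤ (lam * z).re := by
      have h5 : ‖lam * z‖ ≤ ‖lam‖ * ε := by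
        rw [norm_mul]
        exact mul_le_mul_of_nonneg_left hznorm.le (norm_nonneg _)
      have h6 := Complex.abs_re_le_norm (lam * z)
      have h7 : |(lam * z).re| ≤ ‖lam‖ * ε := le_trans h6 h5
      linarith [(abs_le.mp h7).1]
    linarith [hS_le, hS_re, h3, h4]
  have hlim : Filter.Tendsto (fun ε : ℝ => (m - ε)^k - ‖lam‖ * ε)
      (nhdsWithin 0 (Set.Ioi 0)) (nhds (m^k)) := by
    have hc : ContinuousAt (fun ε : ℝ => (m - ε)^k - ‖lam‖ * ε) 0 := by fun_prop
    have := hc.tendsto.mono_left (nhdsWithin_le_nhds (a := (0:ℝ)) (s := Set.Ioi (0:ℝ)))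
    simpa using this
  have hev : ∀ᶠ ε in nhdsWithin (0:ℝ) (Set.Ioi 0), (m - ε)^k - ‖lam‖*ε ≤ ‖B‖ :=
    Filter.eventually_of_mem (Ioc_mem_nhdsGT_of_mem ⟨le_refl 0, hm0⟩)
      (fun ε hε => hBb ε hε.1 hε.2)
  have hgoal1 : m^k ≤ ‖B‖ := le_of_tendsto hlim hev
  have hgoal2 : ‖T^(2*k)‖ ≤ m^k := by
    rw [pow_mul]
    exact norm_pow_le' _ (by omega)
  exact le_trans hgoal2 hgoal1
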